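/- (Corollary 1, uniqueness of sharp decompositions.) Fix positive integers m₁, m₂, s₁, s₂ and ε > 0. Let L and B be finitely supported functions ℤ×ℤ → ℝ, let (κ_i)_{i=1,…,s₁s₂} be an orthonormal basis of the space of functions supported in the s₁×s₂ grid, set σ_i = ‖(L⊗B)⊗κ_i‖_F, assume σ_i > 0 for all i, and let σ_max = max_i σ_i. Suppose B admits two decompositions B = I′⊗K′ = I″⊗K″, where K′, K″ lie in the simplex S and are supported in the m₁×m₂ grid, I′ ≠ 0, I″ ≠ 0, and both I′ and I″ are sharp in the sense that ‖(L⊗I′)⊗X‖_F ≥ (2√2·σ_max/ε)·‖X‖_F and ‖(L⊗I″)⊗X‖_F ≥ (2√2·σ_max/ε)·‖X‖_F for every X supported in the (m₁+s₁−1)×(m₂+s₂−1) grid. Then ‖K′ − K″‖_F ≤ ε. -/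

import Mathlib

/-- Images, kernels, and filters: finitely supported functions `ℤ × ℤ → ℝ`. -/
abbrev Img := (ℤ × ℤ) →₀ ℝ

/-- Discrete 2D convolution: `(X ⊗ Y)(i,j) = ∑_{(u,v)} X((i,j)-(u,v)) * Y(u,v)`. -/
noncomputable def conv (X Y : Img) : Img :=
  X.sum fun a xa => Y.sum fun b yb => Finsupp.single (a + b) (xa * yb)

/-- Frobenius norm `‖X‖_F = √(∑ X(i,j)²)`. -/
noncomputable def frob (X : Img) : ℝ := Real.sqrt (X.sum fun _ c => c ^ 2)

/-- Inner product `⟨X, Y⟩ = ∑ X(i,j) * Y(i,j)`. -/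
noncomputable def inner2 (X Y : Img) : ℝ := X.sum fun p c => c * Y p

/-- ℓ¹ norm `‖X‖₁ = ∑ |X(i,j)|`. -/
noncomputable def l1 (X : Img) : ℝ := X.sum fun _ c => |c|

/-- The simplex `S` of blur kernels: nonnegative entries summing to one. -/
def InSimplex (K : Img) : Prop := (∀ p, 0 ≤ K p) ∧ (K.sum fun _ c => c) = 1

/-- `X` is supported in the `a × b` grid `{0,…,a-1} × {0,…,b-1}`. -/
def SuppIn (a b : ℕ) (X : Img) : Prop :=
  ∀ p : ℤ × ℤ, ¬(0 ≤ p.1 ∧ p.1 < (a : ℤ) ∧ 0 ≤ p.2 ∧ p.2 < (b : ℤ)) → X p = 0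

/-! ### Auxiliary machinery -/

abbrev A2 := AddMonoidAlgebra ℝ (ℤ × ℤ)
noncomputable def toA (X : Img) : A2 := AddMonoidAlgebra.ofCoeff X
@[simp] lemma toA_apply (X : Img) (a : ℤ × ℤ) : (toA X).coeff a = X a := rfl
@[simp] lemma toA_support (X : Img) : (toA X).coeff.support = X.support := rfl

lemma conv_eq (X Y : Img) : conv X Y = (toA X * toA Y).coeff := by
  rw [AddMonoidAlgebra.mul_def]
  simp only [conv, toA, AddMonoidAlgebra.coeff_ofCoeff, ← AddMonoidAlgebra.ofCoeff_single,
    ← AddMonoidAlgebra.ofCoeff_finsuppSum]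

lemma toA_conv (X Y : Img) : toA (conv X Y) = toA X * toA Y := by rw [conv_eq]; rfl

lemma sub_conv (X Y Z : Img) : conv (X - Y) Z = conv X Z - conv Y Z := by
  rw [conv_eq, conv_eq, conv_eq]
  show _ = (toA X * toA Z).coeff - (toA Y * toA Z).coeff
  rw [show toA (X - Y) = toA X - toA Y from rfl, sub_mul]
  rfl

lemma conv_rearrange (U V W Z : Img) :
    conv (conv U (conv V W)) Z = conv (conv U V) (conv W Z) := by
  rw [conv_eq (conv U (conv V W)) Z, toA_conv, toA_conv, conv_eq (conv U V) (conv W Z),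
    toA_conv, toA_conv]
  congr 1
  ring

lemma conv_apply_support (X Y : Img) (p : ℤ × ℤ) :
    conv X Y p = ∑ b ∈ Y.support, X (p - b) * Y b := by
  rw [conv_eq, AddMonoidAlgebra.mul_apply]
  simp only [Finsupp.sum, toA_apply, toA_support]
  rw [Finset.sum_comm]
  refine Finset.sum_congr rfl fun b _ => ?_
  simp only [show ∀ a : ℤ × ℤ, (a + b = p) = (a = p - b) from
    fun a => propext eq_sub_iff_add_eq.symm]
  rw [Finset.sum_ite_eq' X.support (p - b) (fun a => X a * Y b)]
  by_cases h : p - b ∈ X.support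
  · simp [h]
  · simp [h, Finsupp.notMem_support_iff.mp h]

lemma conv_apply (X Y : Img) (t : Finset (ℤ × ℤ)) (ht : Y.support ⊆ t) (p : ℤ × ℤ) :
    conv X Y p = ∑ b ∈ t, X (p - b) * Y b := by
  rw [conv_apply_support]
  refine Finset.sum_subset ht fun b _ hb => ?_
  rw [Finsupp.notMem_support_iff.mp hb, mul_zero]

/-! ### Frobenius norm lemmas -/

noncomputable def frobSq (X : Img) : ℝ := X.sum fun _ c => c ^ 2

lemma frobSq_eq_sum (X : Img) (t : Finset (ℤ × ℤ)) (ht : X.support ⊆ t) :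
    frobSq X = ∑ p ∈ t, X p ^ 2 :=
  Finsupp.sum_of_support_subset X ht _ (by simp)

lemma frobSq_nonneg (X : Img) : 0 ≤ frobSq X := by
  rw [frobSq_eq_sum X X.support subset_rfl]
  exact Finset.sum_nonneg fun p _ => sq_nonneg _

lemma frob_eq (X : Img) : frob X = Real.sqrt (frobSq X) := rfl

lemma frob_nonneg (X : Img) : 0 ≤ frob X := Real.sqrt_nonneg _

lemma frob_sq (X : Img) : frob X ^ 2 = frobSq X := Real.sq_sqrt (frobSq_nonneg X)

lemma frob_sub_le (X Y : Img) : frob (X - Y) ≤ frob X + frob Y := by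
  classical
  set t := X.support ∪ Y.support with hts
  have hX : X.support ⊆ t := Finset.subset_union_left
  have hY : Y.support ⊆ t := Finset.subset_union_right
  have hXY : (X - Y).support ⊆ t := Finsupp.support_sub
  set a := ∑ p ∈ t, X p ^ 2 with ha
  set b := ∑ p ∈ t, Y p ^ 2 with hb
  have ha0 : 0 ≤ a := Finset.sum_nonneg fun p _ => sq_nonneg _
  have hb0 : 0 ≤ b := Finset.sum_nonneg fun p _ => sq_nonneg _
  set c := ∑ p ∈ t, X p * Y p with hc
  have hcs : c ^ 2 ≤ a * b := Finset.sum_mul_sq_le_sq_mul_sq t _ _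
  have habs : |c| ≤ Real.sqrt a * Real.sqrt b := by
    rw [← Real.sqrt_sq_eq_abs, ← Real.sqrt_mul ha0]
    exact Real.sqrt_le_sqrt hcs
  have hexp : frobSq (X - Y) = a - 2 * c + b := by
    rw [frobSq_eq_sum _ t hXY, ha, hb, hc, Finset.mul_sum, ← Finset.sum_sub_distrib,
      ← Finset.sum_add_distrib]
    exact Finset.sum_congr rfl fun p _ => by rw [Finsupp.sub_apply]; ring
  have h2 : frobSq (X - Y) ≤ (Real.sqrt a + Real.sqrt b) ^ 2 := by
    have : (Real.sqrt a + Real.sqrt b) ^ 2 = a + 2 * (Real.sqrt a * Real.sqrt b) + b := by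
      rw [add_sq, Real.sq_sqrt ha0, Real.sq_sqrt hb0]; ring
    rw [hexp, this]
    have := neg_abs_le c
    nlinarith [habs]
  calc frob (X - Y) = Real.sqrt (frobSq (X - Y)) := rfl
    _ ≤ Real.sqrt ((Real.sqrt a + Real.sqrt b) ^ 2) := Real.sqrt_le_sqrt h2
    _ = Real.sqrt a + Real.sqrt b := Real.sqrt_sq (by positivity)
    _ = frob X + frob Y := by
        rw [frob_eq, frob_eq, frobSq_eq_sum X t hX, frobSq_eq_sum Y t hY]

/-! ### Support of a convolution -/

lemma suppIn_conv {m₁ m₂ s₁ s₂ : ℕ} (hm₁ : 0 < m₁) (hm₂ : 0 < m₂) (hs₁ : 0 < s₁)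
    (hs₂ : 0 < s₂) {X Y : Img} (hX : SuppIn m₁ m₂ X) (hY : SuppIn s₁ s₂ Y) :
    SuppIn (m₁ + s₁ - 1) (m₂ + s₂ - 1) (conv X Y) := by
  intro p hp
  rw [conv_apply_support]
  refine Finset.sum_eq_zero fun b hb => ?_
  rw [Finsupp.mem_support_iff] at hb
  by_cases hX0 : X (p - b) = 0
  · rw [hX0, zero_mul]
  exfalso
  have hbgrid : 0 ≤ b.1 ∧ b.1 < (s₁ : ℤ) ∧ 0 ≤ b.2 ∧ b.2 < (s₂ : ℤ) := by
    by_contra h; exact hb (hY b h)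
  have hpb : 0 ≤ (p - b).1 ∧ (p - b).1 < (m₁ : ℤ) ∧ 0 ≤ (p - b).2 ∧ (p - b).2 < (m₂ : ℤ) := by
    by_contra h; exact hX0 (hX _ h)
  simp only [Prod.fst_sub, Prod.snd_sub] at hpb
  exact hp (by omega)

/-! ### Parseval identity for the orthonormal family -/

section Parseval
open Pointwise
variable {s₁ s₂ : ℕ}

def emb (g : Fin s₁ × Fin s₂) : ℤ × ℤ := ((g.1 : ℤ), (g.2 : ℤ))

lemma emb_injective : Function.Injective (emb (s₁ := s₁) (s₂ := s₂)) := by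
  intro g h hf
  simp only [emb, Prod.ext_iff] at hf ⊢
  exact ⟨Fin.ext (by exact_mod_cast hf.1), Fin.ext (by exact_mod_cast hf.2)⟩

noncomputable def gridF (s₁ s₂ : ℕ) : Finset (ℤ × ℤ) :=
  Finset.univ.map ⟨emb (s₁ := s₁) (s₂ := s₂), emb_injective⟩

lemma support_subset_gridF {X : Img} (hX : SuppIn s₁ s₂ X) : X.support ⊆ gridF s₁ s₂ := by
  intro p hp
  rw [Finsupp.mem_support_iff] at hp
  by_contra hmem
  apply hp
  apply hX
  intro hbox
  apply hmem
  rw [gridF, Finset.mem_map]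
  refine ⟨(⟨p.1.toNat, by omega⟩, ⟨p.2.toNat, by omega⟩), Finset.mem_univ _, ?_⟩
  simp only [Function.Embedding.coeFn_mk, emb, Prod.ext_iff]
  constructor <;> simp <;> omega

lemma parseval (hs₁ : 0 < s₁) (hs₂ : 0 < s₂)
    (κ : Fin (s₁ * s₂) → Img) (hκsupp : ∀ i, SuppIn s₁ s₂ (κ i))
    (hortho : ∀ i j, inner2 (κ i) (κ j) = if i = j then 1 else 0)
    (D : Img) :
    ∑ i, frobSq (conv D (κ i)) = (s₁ * s₂ : ℕ) * frobSq D := by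
  classical
  set G := Fin s₁ × Fin s₂
  set E := EuclideanSpace ℝ G
  set e : Fin (s₁ * s₂) → E := fun i => WithLp.toLp 2 (fun g => κ i (emb g)) with he
  have hinner : ∀ (v : E) (i), (inner ℝ v (e i) : ℝ) = ∑ g : G, v g * κ i (emb g) := by
    intro v i
    rw [PiLp.inner_apply]
    exact Finset.sum_congr rfl fun g _ => by simp [he, mul_comm]
  have hON : Orthonormal ℝ e := by
    rw [orthonormal_iff_ite]
    intro i j
    rw [hinner, ← hortho i j, inner2,
      Finsupp.sum_of_support_subset _ (support_subset_gridF (hκsupp i)) _ (by simp),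
      gridF, Finset.sum_map]
    rfl
  have hcard : Fintype.card (Fin (s₁ * s₂)) = Module.finrank ℝ E := by
    simp [E, G, finrank_euclideanSpace, Fintype.card_prod]
  have hne : Nonempty (Fin (s₁ * s₂)) := ⟨⟨0, Nat.mul_pos hs₁ hs₂⟩⟩
  set bas := basisOfLinearIndependentOfCardEqFinrank hON.linearIndependent hcard with hbas
  have hbe : ⇑bas = e := coe_basisOfLinearIndependentOfCardEqFinrank _ _
  have hONb : Orthonormal ℝ ⇑bas := hbe ▸ hON
  set ob : OrthonormalBasis (Fin (s₁ * s₂)) ℝ E := bas.toOrthonormalBasis hONb with hob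
  have hobe : ∀ i, ob i = e i := by
    intro i; rw [hob, Module.Basis.coe_toOrthonormalBasis, hbe]
  have hpars : ∀ v : E, ∑ i, (inner ℝ (e i) v : ℝ) ^ 2 = ∑ g : G, v g ^ 2 := by
    intro v
    have h1 : ‖v‖ ^ 2 = ∑ g : G, v g ^ 2 := by
      rw [EuclideanSpace.norm_eq, Real.sq_sqrt (Finset.sum_nonneg fun g _ => by positivity)]
      exact Finset.sum_congr rfl fun g _ => by rw [Real.norm_eq_abs, sq_abs]
    have h2 : ‖ob.repr v‖ = ‖v‖ := LinearIsometryEquiv.norm_map _ _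
    have h3 : ‖ob.repr v‖ ^ 2 = ∑ i, (ob.repr v i) ^ 2 := by
      rw [EuclideanSpace.norm_eq, Real.sq_sqrt (Finset.sum_nonneg fun g _ => by positivity)]
      exact Finset.sum_congr rfl fun g _ => by rw [Real.norm_eq_abs, sq_abs]
    rw [← h1, ← h2, h3]
    exact Finset.sum_congr rfl fun i _ => by
      rw [ob.repr_apply_apply, hobe]
  set P : Finset (ℤ × ℤ) := D.support + gridF s₁ s₂ with hP
  have hsupp : ∀ i, (conv D (κ i)).support ⊆ P := by
    intro i
    rw [conv_eq]
    refine (AddMonoidAlgebra.support_coeff_mul_subset (toA D) (toA (κ i))).trans ?_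
    exact Finset.add_subset_add_left (support_subset_gridF (hκsupp i))
  have hpt : ∀ (p : ℤ × ℤ) (i), conv D (κ i) p = ∑ g : G, D (p - emb g) * κ i (emb g) := by
    intro p i
    rw [conv_apply D (κ i) (gridF s₁ s₂) (support_subset_gridF (hκsupp i)) p,
      gridF, Finset.sum_map]
    rfl
  calc ∑ i, frobSq (conv D (κ i))
      = ∑ i, ∑ p ∈ P, (conv D (κ i) p) ^ 2 :=
        Finset.sum_congr rfl fun i _ => frobSq_eq_sum _ P (hsupp i)
    _ = ∑ p ∈ P, ∑ i, (conv D (κ i) p) ^ 2 := Finset.sum_comm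
    _ = ∑ p ∈ P, ∑ g : G, D (p - emb g) ^ 2 := by
        refine Finset.sum_congr rfl fun p _ => ?_
        have := hpars (WithLp.toLp 2 (fun g => D (p - emb g)) : E)
        rw [← this]
        refine Finset.sum_congr rfl fun i _ => ?_
        rw [hpt p i, real_inner_comm, hinner]
    _ = ∑ g : G, ∑ p ∈ P, D (p - emb g) ^ 2 := Finset.sum_comm
    _ = ∑ _g : G, frobSq D := by
        refine Finset.sum_congr rfl fun g _ => ?_
        rw [show (∑ p ∈ P, D (p - emb g) ^ 2) = ∑ q ∈ P.image (fun p => p - emb g), D q ^ 2 by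
          rw [Finset.sum_image (fun x _ y _ h => by
            have := congrArg (· + emb g) h; simpa using this)]]
        refine (frobSq_eq_sum D _ ?_).symm
        intro q hq
        rw [Finset.mem_image]
        refine ⟨q + emb g, ?_, by abel⟩
        rw [hP]
        exact Finset.add_mem_add hq (by rw [gridF]; exact Finset.mem_map_of_mem _ (Finset.mem_univ g))
    _ = (s₁ * s₂ : ℕ) * frobSq D := by
        rw [Finset.sum_const, Finset.card_univ, nsmul_eq_mul]
        congr 1
        simp [G]
end Parseval

/-- Corollary 1 (uniqueness of sharp decompositions): any two τ-sharp decompositions of the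
same blurry image have kernels within `ε` of each other. -/
theorem sharp_decomposition_unique (m₁ m₂ s₁ s₂ : ℕ)
    (hm₁ : 0 < m₁) (hm₂ : 0 < m₂) (hs₁ : 0 < s₁) (hs₂ : 0 < s₂)
    (ε : ℝ) (hε : 0 < ε)
    (L B : Img)
    (κ : Fin (s₁ * s₂) → Img) (hκsupp : ∀ i, SuppIn s₁ s₂ (κ i))
    (hortho : ∀ i j, inner2 (κ i) (κ j) = if i = j then 1 else 0)
    (σ : Fin (s₁ * s₂) → ℝ) (hσ : ∀ i, σ i = frob (conv (conv L B) (κ i)))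
    (hσpos : ∀ i, 0 < σ i)
    (σmax : ℝ) (hσmax : IsGreatest (Set.range σ) σmax)
    (I' K' I'' K'' : Img) (hI' : I' ≠ 0) (hI'' : I'' ≠ 0)
    (hK' : InSimplex K') (hK'supp : SuppIn m₁ m₂ K')
    (hK'' : InSimplex K'') (hK''supp : SuppIn m₁ m₂ K'')
    (hB' : B = conv I' K') (hB'' : B = conv I'' K'')
    (hsharp' : ∀ X : Img, SuppIn (m₁ + s₁ - 1) (m₂ + s₂ - 1) X →
      (2 * Real.sqrt 2 * σmax / ε) * frob X ≤ frob (conv (conv L I') X))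
    (hsharp'' : ∀ X : Img, SuppIn (m₁ + s₁ - 1) (m₂ + s₂ - 1) X →
      (2 * Real.sqrt 2 * σmax / ε) * frob X ≤ frob (conv (conv L I'') X)) :
    frob (K' - K'') ≤ ε := by
  obtain ⟨j, hj⟩ := hσmax.1
  have hσmaxpos : 0 < σmax := hj ▸ hσpos j
  have hs2pos : (0:ℝ) < Real.sqrt 2 := Real.sqrt_pos.mpr (by norm_num)
  set τ := 2 * Real.sqrt 2 * σmax / ε with hτdef
  have hτpos : 0 < τ := by positivity
  have hσle : ∀ i, σ i ≤ σmax := fun i => hσmax.2 ⟨i, rfl⟩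
  -- the key bound for either decomposition
  have key : ∀ (I K : Img), B = conv I K → SuppIn m₁ m₂ K →
      (∀ X : Img, SuppIn (m₁ + s₁ - 1) (m₂ + s₂ - 1) X →
        τ * frob X ≤ frob (conv (conv L I) X)) →
      ∀ i, frob (conv K (κ i)) ≤ ε / (2 * Real.sqrt 2) := by
    intro I K hBIK hKsupp hsharp i
    have hXsupp := suppIn_conv hm₁ hm₂ hs₁ hs₂ hKsupp (hκsupp i)
    have h1 := hsharp _ hXsupp
    have h2 : conv (conv L I) (conv K (κ i)) = conv (conv L B) (κ i) := by
      rw [hBIK]; exact (conv_rearrange L I K (κ i)).symm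
    rw [h2, ← hσ i] at h1
    have h3 : τ * frob (conv K (κ i)) ≤ σmax := h1.trans (hσle i)
    have h4 : frob (conv K (κ i)) ≤ σmax / τ := (le_div_iff₀' hτpos).mpr h3
    have h5 : σmax / τ = ε / (2 * Real.sqrt 2) := by
      rw [hτdef]
      field_simp
    rw [h5] at h4
    exact h4
  have hbound : ∀ i, frob (conv (K' - K'') (κ i)) ≤ ε / Real.sqrt 2 := by
    intro i
    have e1 := key I' K' hB' hK'supp hsharp' i
    have e2 := key I'' K'' hB'' hK''supp hsharp'' i
    rw [sub_conv]
    calc frob (conv K' (κ i) - conv K'' (κ i))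
        ≤ frob (conv K' (κ i)) + frob (conv K'' (κ i)) := frob_sub_le _ _
      _ ≤ ε / (2 * Real.sqrt 2) + ε / (2 * Real.sqrt 2) := add_le_add e1 e2
      _ = ε / Real.sqrt 2 := by field_simp; ring
  have hsq : ∀ i, frobSq (conv (K' - K'') (κ i)) ≤ ε ^ 2 / 2 := by
    intro i
    rw [← frob_sq]
    calc frob (conv (K' - K'') (κ i)) ^ 2
        ≤ (ε / Real.sqrt 2) ^ 2 := pow_le_pow_left₀ (frob_nonneg _) (hbound i) 2
      _ = ε ^ 2 / 2 := by rw [div_pow, Real.sq_sqrt (by norm_num : (0:ℝ) ≤ 2)]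
  have hsum := parseval hs₁ hs₂ κ hκsupp hortho (K' - K'')
  have hN : (0:ℝ) < ((s₁ * s₂ : ℕ) : ℝ) := by
    exact_mod_cast Nat.mul_pos hs₁ hs₂
  have htot : ((s₁ * s₂ : ℕ) : ℝ) * frobSq (K' - K'') ≤ ((s₁ * s₂ : ℕ) : ℝ) * (ε ^ 2 / 2) := by
    rw [← hsum]
    calc ∑ i, frobSq (conv (K' - K'') (κ i))
        ≤ ∑ _i : Fin (s₁ * s₂), ε ^ 2 / 2 := Finset.sum_le_sum fun i _ => hsq i
      _ = ((s₁ * s₂ : ℕ) : ℝ) * (ε ^ 2 / 2) := by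
          rw [Finset.sum_const, Finset.card_univ, Fintype.card_fin, nsmul_eq_mul]
  have hD : frobSq (K' - K'') ≤ ε ^ 2 / 2 := le_of_mul_le_mul_left htot hN
  rw [frob_eq]
  calc Real.sqrt (frobSq (K' - K''))
      ≤ Real.sqrt (ε ^ 2) := Real.sqrt_le_sqrt (by nlinarith [sq_nonneg ε])
    _ = ε := Real.sqrt_sq hε.le
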